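/- arXiv:2210.08564 — 2 statements merged into one kernel-verified Lean document; each statement's English description precedes it below -/
import Mathlib

section
/- For any positive semidefinite Hermitian matrices A, B of size n×n, if tr(AB) = tr(A)·tr(B) and tr(A) ≠ 0 and tr(B) ≠ 0, then A and B have rank at most one. -/
open Matrix ComplexOrder

lemma aux_rank_le_one (n : ℕ) (A B : Matrix (Fin n) (Fin n) ℂ)
    (hA : A.PosSemidef) (hB : B.PosSemidef)
    (heq : (A * B).trace = A.trace * B.trace)
    (hAtr : A.trace ≠ 0) (hBtr : B.trace ≠ 0) :
    A.rank ≤ 1 := by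
  classical
  set hAH := hA.1 with hAHdef
  set U : Matrix (Fin n) (Fin n) ℂ := (hAH.eigenvectorUnitary : Matrix (Fin n) (Fin n) ℂ) with hU
  set lam := hAH.eigenvalues with hlam
  set M : Matrix (Fin n) (Fin n) ℂ := star U * B * U with hM
  have hMps : M.PosSemidef := by
    have := hB.conjTranspose_mul_mul_same U
    exact this
  -- diagonal entries of M are nonneg reals
  have hdiag : ∀ j, 0 ≤ M j j := by
    intro j
    have := hMps.dotProduct_mulVec_nonneg (Pi.single j 1)
    simpa [dotProduct, Matrix.mulVec, Pi.single_apply, Finset.sum_ite_eq,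
      Finset.mul_sum] using this
  set m : Fin n → ℝ := fun j => (M j j).re with hm
  have hmre : ∀ j, M j j = (m j : ℂ) := by
    intro j
    have h := hdiag j
    rw [Complex.le_def] at h
    exact Complex.ext rfl (by simpa using h.2.symm)
  have hmnn : ∀ j, 0 ≤ m j := fun j => by
    have h := hdiag j; rw [Complex.le_def] at h; simpa using h.1
  have hunit : U * star U = 1 := Matrix.mem_unitaryGroup_iff.mp hAH.eigenvectorUnitary.2
  have hunit' : star U * U = 1 := Matrix.mem_unitaryGroup_iff'.mp hAH.eigenvectorUnitary.2
  set D : Matrix (Fin n) (Fin n) ℂ := Matrix.diagonal (Complex.ofReal ∘ lam) with hD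
  have hspec : A = U * D * star U := hAH.spectral_theorem
  -- trace of A
  have htrA : A.trace = ∑ j, (lam j : ℂ) := by
    calc A.trace = (U * D * star U).trace := by rw [← hspec]
    _ = (star U * (U * D)).trace := by rw [Matrix.trace_mul_comm]
    _ = D.trace := by rw [← mul_assoc, hunit', one_mul]
    _ = ∑ j, (lam j : ℂ) := by simp [hD, Matrix.trace_diagonal]
  -- trace of B
  have htrB : B.trace = ∑ j, (m j : ℂ) := by
    calc B.trace = (star U * B * U).trace := by
          rw [Matrix.trace_mul_comm, ← mul_assoc, hunit, one_mul]
    _ = ∑ j, M j j := by rw [hM]; rfl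
    _ = ∑ j, (m j : ℂ) := by simp_rw [hmre]
  -- trace of A * B
  have htrAB : (A * B).trace = ∑ j, (lam j : ℂ) * (m j : ℂ) := by
    have : A * B = U * (D * M) * star U := by
      rw [hspec, hM]
      simp only [Matrix.mul_assoc, hunit, Matrix.mul_one]
    calc (A * B).trace = (U * (D * M) * star U).trace := by rw [this]
    _ = (star U * (U * (D * M))).trace := by rw [Matrix.trace_mul_comm]
    _ = (D * M).trace := by rw [← mul_assoc, hunit', one_mul]
    _ = ∑ j, (lam j : ℂ) * M j j := by
        simp [Matrix.trace, Matrix.diag, hD, Matrix.diagonal_mul]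
    _ = ∑ j, (lam j : ℂ) * (m j : ℂ) := by simp_rw [hmre]
  -- real equation
  have hreal : ∑ j, lam j * m j = (∑ j, lam j) * (∑ j, m j) := by
    have : ((∑ j, lam j * m j : ℝ) : ℂ) = (((∑ j, lam j) * (∑ j, m j) : ℝ) : ℂ) := by
      push_cast
      rw [← htrAB, ← htrA, ← htrB] at *
      exact heq
    exact_mod_cast this
  set S : ℝ := ∑ j, m j with hS
  have hSpos : 0 < S := by
    have hSne : S ≠ 0 := by
      intro h
      apply hBtr
      rw [htrB]
      have : ((S : ℝ) : ℂ) = 0 := by exact_mod_cast h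
      simpa [hS] using this
    exact lt_of_le_of_ne (Finset.sum_nonneg fun j _ => hmnn j) (Ne.symm hSne)
  have hlnn : ∀ j, 0 ≤ lam j := fun j => hA.eigenvalues_nonneg j
  -- pointwise equality
  have hpt : ∀ j ∈ Finset.univ, lam j * m j = lam j * S := by
    rw [← Finset.sum_eq_sum_iff_of_le]
    · rw [← Finset.sum_mul]
      exact hreal
    · intro j _
      exact mul_le_mul_of_nonneg_left (by
        have : m j ≤ S := Finset.single_le_sum (fun k _ => hmnn k) (Finset.mem_univ j)
        exact this) (hlnn j)
  -- conclude
  rw [hAH.rank_eq_card_non_zero_eigs]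
  rw [Fintype.card_le_one_iff]
  rintro ⟨i, hi⟩ ⟨k, hk⟩
  by_contra hne
  have hik : i ≠ k := fun h => hne (Subtype.ext h)
  have hmi : m i = S := by
    have := hpt i (Finset.mem_univ i)
    exact mul_left_cancel₀ hi this
  have hmk : m k = S := by
    have := hpt k (Finset.mem_univ k)
    exact mul_left_cancel₀ hk this
  have h2 : m i + m k ≤ S := by
    have : ∑ j ∈ ({i, k} : Finset (Fin n)), m j ≤ S :=
      Finset.sum_le_sum_of_subset_of_nonneg (Finset.subset_univ _)
        (fun j _ _ => hmnn j)
    simpa [Finset.sum_pair hik] using this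
  rw [hmi, hmk] at h2
  linarith

theorem rank_le_one_of_trace_mul_eq (n : ℕ) (A B : Matrix (Fin n) (Fin n) ℂ)
    (hA : A.PosSemidef) (hB : B.PosSemidef)
    (heq : (A * B).trace = A.trace * B.trace)
    (hAtr : A.trace ≠ 0) (hBtr : B.trace ≠ 0) :
    A.rank ≤ 1 ∧ B.rank ≤ 1 := by
  refine ⟨aux_rank_le_one n A B hA hB heq hAtr hBtr, ?_⟩
  refine aux_rank_le_one n B A hB hA ?_ hBtr hAtr
  rw [Matrix.trace_mul_comm, heq]; ring
end

section
/- If X₁, X₂ are N×N Hermitian PSD matrices with tr(E_n X₁) = 1 and tr(E_n X₂) = 1 for all n (so tr X₁ = tr X₂ = N) and tr(X₁X₂) = tr(X₁)tr(X₂), then X₁ = X₂ and there exists x ∈ ℂ^N with X₁ = x xᴴ and |x_n| = 1 for all n. -/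
open Matrix ComplexOrder

private lemma qform_aux {N : ℕ} (X : Matrix (Fin N) (Fin N) ℂ) (i j : Fin N) (a : ℂ) :
    star (fun k => (if k = i then (1:ℂ) else 0) - if k = j then star a else 0) ⬝ᵥ
      X *ᵥ (fun k => (if k = i then (1:ℂ) else 0) - if k = j then star a else 0)
      = X i i - X i j * star a - a * X j i + a * X j j * star a := by
  simp only [dotProduct, mulVec, dotProduct, Pi.star_apply, star_sub,
    apply_ite (star : ℂ → ℂ), star_zero, star_one, star_star,
    mul_sub, sub_mul, ite_mul, mul_ite,
    zero_mul, mul_zero, one_mul, Finset.sum_sub_distrib, Finset.sum_ite_eq',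
    Finset.mem_univ, if_true]
  ring

private lemma mulvec_aux {N : ℕ} (X : Matrix (Fin N) (Fin N) ℂ) (i j k : Fin N) (a : ℂ) :
    (X *ᵥ (fun k => (if k = i then (1:ℂ) else 0) - if k = j then star a else 0)) k
      = X k i - X k j * star a := by
  simp only [mulVec, dotProduct, mul_sub, mul_ite, mul_zero, mul_one,
    Finset.sum_sub_distrib, Finset.sum_ite_eq', Finset.mem_univ, if_true]

/-- For `X` PSD with unit diagonal, entries have squared modulus at most 1. -/
private lemma normSq_le_one {N : ℕ} {X : Matrix (Fin N) (Fin N) ℂ} (h : X.PosSemidef)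
    (hdiag : ∀ n, X n n = 1) (i j : Fin N) : Complex.normSq (X i j) ≤ 1 := by
  set a := X i j with ha
  have h0 := h.dotProduct_mulVec_nonneg (fun k => (if k = i then (1:ℂ) else 0) - if k = j then star a else 0)
  rw [qform_aux] at h0
  have hji : X j i = star a := by rw [ha, ← h.1.apply i j, star_star]
  rw [hdiag i, hdiag j, hji, mul_one] at h0
  have h1 : (0:ℂ) ≤ 1 - a * star a := by
    convert h0 using 1; ring
  rw [show star a = (starRingEnd ℂ) a from rfl, Complex.mul_conj] at h1
  have hre := (Complex.nonneg_iff.mp h1).1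
  simp only [Complex.sub_re, Complex.one_re, Complex.ofReal_re] at hre
  linarith

/-- For `X` PSD with unit diagonal and `|X i j| = 1`, columns `i` and `j` are proportional. -/
private lemma col_rel {N : ℕ} {X : Matrix (Fin N) (Fin N) ℂ} (h : X.PosSemidef)
    (hdiag : ∀ n, X n n = 1) (i j : Fin N) (hij : Complex.normSq (X i j) = 1) :
    ∀ k, X k i = star (X i j) * X k j := by
  set a := X i j with ha
  set v : Fin N → ℂ := fun k => (if k = i then (1:ℂ) else 0) - if k = j then star a else 0
    with hv
  have hji : X j i = star a := by rw [ha, ← h.1.apply i j, star_star]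
  have hone : a * star a = 1 := by
    rw [show star a = (starRingEnd ℂ) a from rfl, Complex.mul_conj, hij]
    norm_num
  have h0 : star v ⬝ᵥ X *ᵥ v = 0 := by
    rw [hv, qform_aux, hdiag i, hdiag j, hji]
    linear_combination -hone
  have hz := (h.dotProduct_mulVec_zero_iff v).mp h0
  intro k
  have hk : X k i - X k j * star a = 0 := by
    have h2 := congrFun hz k
    rw [hv, mulvec_aux] at h2
    simpa using h2
  have h1 : X k i = X k j * star a := by linear_combination hk
  rw [h1]; ring

theorem eq_and_rank_one_unimodular_of_trace_eq (N : ℕ)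
    (X₁ X₂ : Matrix (Fin N) (Fin N) ℂ)
    (h₁ : X₁.PosSemidef) (h₂ : X₂.PosSemidef)
    (hd₁ : ∀ n : Fin N, (Matrix.single n n (1 : ℂ) * X₁).trace = 1)
    (hd₂ : ∀ n : Fin N, (Matrix.single n n (1 : ℂ) * X₂).trace = 1)
    (heq : (X₁ * X₂).trace = X₁.trace * X₂.trace) :
    X₁ = X₂ ∧ ∃ x : Fin N → ℂ,
      X₁ = Matrix.vecMulVec x (star x) ∧ ∀ n, ‖x n‖ = 1 := by
  -- diagonal entries are 1
  have d₁ : ∀ n, X₁ n n = 1 := fun n => by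
    simpa [Matrix.trace, Matrix.diag, Matrix.mul_apply, Matrix.single, ite_and,
      Finset.sum_ite_eq] using hd₁ n
  have d₂ : ∀ n, X₂ n n = 1 := fun n => by
    simpa [Matrix.trace, Matrix.diag, Matrix.mul_apply, Matrix.single, ite_and,
      Finset.sum_ite_eq] using hd₂ n
  -- traces are N
  have tr₁ : X₁.trace = (N : ℂ) := by simp [Matrix.trace, Matrix.diag, d₁]
  have tr₂ : X₂.trace = (N : ℂ) := by simp [Matrix.trace, Matrix.diag, d₂]
  -- modulus bounds
  have b₁ := normSq_le_one h₁ d₁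
  have b₂ := normSq_le_one h₂ d₂
  have a₁ : ∀ i j : Fin N, ‖X₁ i j‖ ≤ 1 := by
    intro i j
    have h := b₁ i j
    rw [← Complex.sq_norm] at h
    nlinarith [norm_nonneg (X₁ i j)]
  have a₂ : ∀ i j : Fin N, ‖X₂ i j‖ ≤ 1 := by
    intro i j
    have h := b₂ i j
    rw [← Complex.sq_norm] at h
    nlinarith [norm_nonneg (X₂ i j)]
  -- the key pointwise identity
  have habs : ∀ i j : Fin N, ‖X₁ i j * X₂ j i‖ ≤ 1 := by
    intro i j
    rw [norm_mul]
    have e1 := a₁ i j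
    have e2 := a₂ j i
    nlinarith [norm_nonneg (X₁ i j), norm_nonneg (X₂ j i)]
  have key : ∀ i j : Fin N, X₁ i j * X₂ j i = 1 := by
    have htr : ∑ i : Fin N, ∑ j : Fin N, (X₁ i j * X₂ j i) = (N : ℂ) * N :=
      calc ∑ i : Fin N, ∑ j : Fin N, (X₁ i j * X₂ j i) = (X₁ * X₂).trace := by
            simp [Matrix.trace, Matrix.diag, Matrix.mul_apply]
        _ = X₁.trace * X₂.trace := heq
        _ = (N : ℂ) * N := by rw [tr₁, tr₂]
    have hre : ∑ i : Fin N, ∑ j : Fin N, ((1:ℝ) - (X₁ i j * X₂ j i).re) = 0 := by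
      have h := congrArg Complex.re htr
      rw [Complex.re_sum] at h
      simp only [Complex.re_sum] at h
      have hN : ((N : ℂ) * N).re = (N : ℝ) * N := by simp [Complex.mul_re]
      rw [hN] at h
      simp only [Finset.sum_sub_distrib, Finset.sum_const, Finset.card_univ,
        Fintype.card_fin, nsmul_eq_mul, mul_one, h]
      ring
    have hnn : ∀ i : Fin N, (0:ℝ) ≤ ∑ j : Fin N, ((1:ℝ) - (X₁ i j * X₂ j i).re) := by
      intro i
      apply Finset.sum_nonneg
      intro j _
      have := (Complex.re_le_norm (X₁ i j * X₂ j i)).trans (habs i j)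
      linarith
    have hterm : ∀ i j : Fin N, (1 : ℝ) - (X₁ i j * X₂ j i).re = 0 := by
      intro i j
      have hout := (Finset.sum_eq_zero_iff_of_nonneg (fun i _ => hnn i)).mp hre i
        (Finset.mem_univ i)
      exact (Finset.sum_eq_zero_iff_of_nonneg (fun j _ => by
        have := (Complex.re_le_norm (X₁ i j * X₂ j i)).trans (habs i j)
        linarith)).mp hout j (Finset.mem_univ j)
    intro i j
    have hre1 : (X₁ i j * X₂ j i).re = 1 := by linarith [hterm i j]
    have him : (X₁ i j * X₂ j i).im = 0 := by
      have h1 : Complex.normSq (X₁ i j * X₂ j i) ≤ 1 := by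
        rw [← Complex.sq_norm]
        nlinarith [habs i j, norm_nonneg (X₁ i j * X₂ j i)]
      rw [Complex.normSq_apply, hre1] at h1
      nlinarith [sq_nonneg (X₁ i j * X₂ j i).im]
    exact Complex.ext hre1 him
  -- unit modulus of all entries of X₁
  have n₁ : ∀ i j : Fin N, Complex.normSq (X₁ i j) = 1 := by
    intro i j
    have h := congrArg Complex.normSq (key i j)
    rw [_root_.map_mul, _root_.map_one] at h
    have e1 := b₁ i j
    have e2 := b₂ j i
    nlinarith [Complex.normSq_nonneg (X₁ i j), Complex.normSq_nonneg (X₂ j i)]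
  -- X₁ = X₂
  have hX12 : X₁ = X₂ := by
    ext i j
    have hk := key i j
    have h1 : X₁ i j * star (X₁ i j) = 1 := by
      rw [show star (X₁ i j) = (starRingEnd ℂ) (X₁ i j) from rfl, Complex.mul_conj, n₁ i j]
      norm_num
    have hne : X₁ i j ≠ 0 := by
      intro h0
      rw [h0, zero_mul] at h1
      exact one_ne_zero h1.symm
    have hz : X₁ i j * (X₂ j i - star (X₁ i j)) = 0 := by
      rw [mul_sub, hk, h1, sub_self]
    have hconj : X₂ j i = star (X₁ i j) := by
      rcases mul_eq_zero.mp hz with h | h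
      · exact absurd h hne
      · exact sub_eq_zero.mp h
    have h2 := h₂.1.apply j i
    rw [hconj] at h2
    have := congrArg star h2
    simpa using this.symm
  refine ⟨hX12, ?_⟩
  -- rank-one decomposition
  rcases Nat.eq_zero_or_pos N with hN | hN
  · subst hN
    exact ⟨fun _ => 1, by ext i j; exact i.elim0, fun n => n.elim0⟩
  · set z : Fin N := ⟨0, hN⟩
    refine ⟨fun n => X₁ n z, ?_, ?_⟩
    · ext i j
      rw [Matrix.vecMulVec_apply]
      have hc := col_rel h₁ d₁ j z (n₁ j z) i
      rw [hc]
      simp only [Pi.star_apply]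
      ring
    · intro n
      rw [Complex.norm_def, n₁ n z, Real.sqrt_one]
end
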